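/- Let p₁,…,p_d be nonnegative integers with p_d ≥ 2, α = p₁+⋯+p_{d−1}, k = ⌊(p_d−2)/(α+1)⌋, and assume p_d ≥ α²−α. Then the lattice size of the simplex T = conv{e₁,…,e_{d+1},(p₁,…,p_d,1)} ⊂ R^{d+1} with respect to the standard simplex satisfies ls_Δ(T) ≤ k+3. -/

import Mathlib

open scoped BigOperators

/-- Lattice width of a set `P ⊆ ℝ^d` in direction `h`:
`max_{x∈P} ⟨h,x⟩ − min_{x∈P} ⟨h,x⟩`. -/
noncomputable def width {d : ℕ} (P : Set (Fin d → ℝ)) (h : Fin d → ℝ) : ℝ :=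
  sSup ((fun x => ∑ i, h i * x i) '' P) - sInf ((fun x => ∑ i, h i * x i) '' P)

/-- `l₁(P) = max_{x∈P}(x₁+⋯+x_d) − Σᵢ min_{x∈P} xᵢ`. -/
noncomputable def l1 {d : ℕ} (P : Set (Fin d → ℝ)) : ℝ :=
  sSup ((fun x => ∑ i, x i) '' P) - ∑ i, sInf ((fun x => x i) '' P)

/-- `P` is a lattice polytope: the convex hull of a nonempty finite set of integer points. -/
def IsLatticePolytope {d : ℕ} (P : Set (Fin d → ℝ)) : Prop :=
  ∃ V : Finset (Fin d → ℝ), V.Nonempty ∧ (∀ v ∈ V, ∀ i, ∃ m : ℤ, v i = (m : ℝ)) ∧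
    P = convexHull ℝ (V : Set (Fin d → ℝ))

/-- `P` is a polytope: the convex hull of a nonempty finite set of points. -/
def IsPolytope {d : ℕ} (P : Set (Fin d → ℝ)) : Prop :=
  ∃ V : Finset (Fin d → ℝ), V.Nonempty ∧ P = convexHull ℝ (V : Set (Fin d → ℝ))

/-- The `i`-th standard basis vector of `ℝ^d`. -/
def stdVert (d : ℕ) (i : Fin d) : Fin d → ℝ := fun j => if j = i then 1 else 0

/-- The extra vertex `(p₁, …, pₙ, q, 1) ∈ ℝ^{n+2}`. -/
def Tvert (n : ℕ) (p : Fin n → ℤ) (q : ℤ) : Fin (n + 2) → ℝ :=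
  fun j => if h : (j : ℕ) < n then (p ⟨j, h⟩ : ℝ) else if (j : ℕ) = n then (q : ℝ) else 1

/-- The simplex `T_{p₁…p_{n} q} = conv{e₁,…,e_{n+2}, (p₁,…,pₙ,q,1)} ⊆ ℝ^{n+2}`. -/
noncomputable def Tsimp (n : ℕ) (p : Fin n → ℤ) (q : ℤ) : Set (Fin (n + 2) → ℝ) :=
  convexHull ℝ (insert (Tvert n p q) (Set.range (stdVert (n + 2))))

/-- Lattice size of `P` with respect to the standard simplex: the smallest `l` such that an
affine unimodular map sends `P` into `lΔ`. -/
noncomputable def lsSimplex {d : ℕ} (P : Set (Fin d → ℝ)) : ℕ :=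
  sInf {l : ℕ | ∃ (A : Matrix (Fin d) (Fin d) ℤ) (v : Fin d → ℤ),
    (A.det = 1 ∨ A.det = -1) ∧
    ∀ x ∈ P, (∀ i, (0 : ℝ) ≤ (A.map (fun m : ℤ => (m : ℝ))).mulVec x i + (v i : ℝ)) ∧
      ∑ i, ((A.map (fun m : ℤ => (m : ℝ))).mulVec x i + (v i : ℝ)) ≤ (l : ℝ)}

/-- Lattice size of `P` with respect to the unit cube: the smallest `l` such that an
affine unimodular map sends `P` into `[0,l]^d`. -/
noncomputable def lsCube {d : ℕ} (P : Set (Fin d → ℝ)) : ℕ :=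
  sInf {l : ℕ | ∃ (A : Matrix (Fin d) (Fin d) ℤ) (v : Fin d → ℤ),
    (A.det = 1 ∨ A.det = -1) ∧
    ∀ x ∈ P, ∀ i, (0 : ℝ) ≤ (A.map (fun m : ℤ => (m : ℝ))).mulVec x i + (v i : ℝ) ∧
      (A.map (fun m : ℤ => (m : ℝ))).mulVec x i + (v i : ℝ) ≤ (l : ℝ)}

set_option maxHeartbeats 1000000 in
/-- with `α = p₁+⋯+p_{d−1}`, `k = ⌊(p_d−2)/(α+1)⌋` and `p_d ≥ α²−α`,
the lattice size of `T = conv{e₁,…,e_{d+1},(p₁,…,p_d,1)}` with respect to the standard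
simplex satisfies `ls_Δ(T) ≤ k+3`. (Here `n = d−1`, `q = p_d`.) -/
theorem lsSimplex_T_le (n : ℕ) (p : Fin n → ℤ) (hp : ∀ i, 0 ≤ p i) (q : ℤ) (hq : 2 ≤ q)
    (α k : ℤ) (hα : α = ∑ i, p i) (hk : k = (q - 2) / (α + 1)) (hbig : α ^ 2 - α ≤ q) :
    (lsSimplex (Tsimp n p q) : ℤ) ≤ k + 3 := by
  have hα0 : 0 ≤ α := hα ▸ Finset.sum_nonneg fun i _ => hp i
  have hα1 : (0:ℤ) < α + 1 := by omega
  obtain ⟨s, hsdef⟩ : ∃ s : ℤ, s = q - 2 - (α+1) * k := ⟨_, rfl⟩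
  have hmod : (q-2) % (α+1) = s := by rw [Int.emod_def, ← hk, hsdef]
  have hs0 : 0 ≤ s := by
    have h1 := Int.emod_nonneg (q-2) (by omega : α+1 ≠ 0); omega
  have hsα : s ≤ α := by
    have h1 := Int.emod_lt_of_pos (q-2) hα1; omega
  have hk0 : 0 ≤ k := hk ▸ Int.ediv_nonneg (by omega) (by omega)
  have hkα : α - 2 ≤ k := by
    have h3 : (α+1)*(α-2) < (α+1)*(k+1) := by nlinarith
    have := lt_of_mul_lt_mul_left h3 (by omega : (0:ℤ) ≤ α+1)
    omega
  -- prefix sums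
  obtain ⟨P, hPdef⟩ : ∃ P : ℕ → ℤ, P = fun j => if h : j < n then p ⟨j, h⟩ else 0 := ⟨_, rfl⟩
  have hPi : ∀ i : Fin n, P i.val = p i := by
    intro i; rw [hPdef]; simp
  have hP0 : ∀ j, 0 ≤ P j := by
    intro j; rw [hPdef]; dsimp only; split
    · exact hp _
    · exact le_refl 0
  have hPα : ∀ j, P j ≤ α := by
    intro j; rw [hPdef]; dsimp only; split
    · exact hα ▸ Finset.single_le_sum (fun i _ => hp i) (Finset.mem_univ _)
    · exact hα0
  obtain ⟨S, hSdef⟩ : ∃ S : ℕ → ℤ, S = fun m => ∑ j ∈ Finset.range m, P j := ⟨_, rfl⟩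
  obtain ⟨G, hGdef⟩ : ∃ G : ℕ → ℤ,
      G = fun m => ∑ j ∈ Finset.range m, if S j < s then P j else 0 := ⟨_, rfl⟩
  have hS0 : S 0 = 0 := by rw [hSdef]; simp
  have hG0 : G 0 = 0 := by rw [hGdef]; simp
  have hSsucc : ∀ m, S (m+1) = S m + P m := by
    intro m; rw [hSdef]; exact Finset.sum_range_succ _ _
  have hGsucc : ∀ m, G (m+1) = G m + if S m < s then P m else 0 := by
    intro m; rw [hGdef]; exact Finset.sum_range_succ _ _
  have hGS : ∀ m, G m ≤ S m := by
    intro m; induction m with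
    | zero => omega
    | succ m ih =>
      have := hP0 m
      rw [hSsucc, hGsucc]; split <;> omega
  have hG2 : ∀ m, min s (S m) ≤ G m := by
    intro m; induction m with
    | zero => omega
    | succ m ih =>
      have := hP0 m
      rw [hSsucc, hGsucc]
      split <;> omega
  have hG3 : ∀ m, G m ≤ max 0 (s - 1 + α) := by
    intro m; induction m with
    | zero => omega
    | succ m ih =>
      have h1 := hGS m
      have h2 := hPα m
      rw [hGsucc]; split <;> omega
  have hSn : S n = α := by
    rw [hSdef, hα]; dsimp only
    rw [← Fin.sum_univ_eq_sum_range]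
    exact Finset.sum_congr rfl fun i _ => hPi i
  obtain ⟨E, hEdef⟩ : ∃ E, E = G n := ⟨_, rfl⟩
  have hEs : s ≤ E := by
    have := hG2 n; rw [hSn] at this; omega
  have hE3 : E ≤ s + k + 1 := by
    have := hG3 n; omega
  obtain ⟨b, hbdef⟩ : ∃ b, b = k + 2 + s - E := ⟨_, rfl⟩
  have hb0 : 0 ≤ b := by omega
  have hb2 : b ≤ k + 2 := by omega
  obtain ⟨c, hcdef⟩ : ∃ c : Fin n → ℤ,
      c = fun i => k + 1 + if S i.val < s then 1 else 0 := ⟨_, rfl⟩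
  have hc0 : ∀ i, 0 ≤ c i := by
    intro i; rw [hcdef]; dsimp only; split <;> omega
  have hc2 : ∀ i, c i ≤ k + 2 := by
    intro i; rw [hcdef]; dsimp only; split <;> omega
  have hcpb : (∑ i, c i * p i) + b = q + α := by
    have h1 : ∑ i, c i * p i = (k+1) * α + E := by
      rw [hcdef]
      have key : ∀ i : Fin n, (fun i => k + 1 + if S i.val < s then 1 else 0) i * p i
          = (k+1) * p i + (if S i.val < s then P i.val else 0) := by
        intro i; dsimp only; rw [hPi i]; split <;> ring
      rw [Finset.sum_congr rfl fun i _ => key i, Finset.sum_add_distrib, ← Finset.mul_sum, ← hα]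
      congr 1
      rw [hEdef, hGdef]
      exact Fin.sum_univ_eq_sum_range (fun j => if S j < s then P j else 0) n
    rw [h1]
    linear_combination hbdef + hsdef
  -- the construction
  obtain ⟨iN, hiN⟩ : ∃ iN : Fin (n+2), iN = ⟨n, by omega⟩ := ⟨_, rfl⟩
  obtain ⟨w', hwdef⟩ : ∃ w' : Fin (n+2) → ℤ,
      w' = fun j : Fin (n+2) => if h : (j:ℕ) < n then -(c ⟨j, h⟩) else if (j:ℕ) = n then 0 else -b := ⟨_, rfl⟩
  have hw_iN : w' iN = 0 := by rw [hwdef, hiN]; simp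
  have hw_le : ∀ j, w' j ≤ 0 := by
    intro j; rw [hwdef]; dsimp only; split
    · rename_i h; have := hc0 ⟨(j:ℕ), h⟩; omega
    · split <;> omega
  have hw_ge : ∀ j, -(k+2) ≤ w' j := by
    intro j; rw [hwdef]; dsimp only; split
    · rename_i h; have := hc2 ⟨(j:ℕ), h⟩; omega
    · split <;> omega
  obtain ⟨M, hM⟩ : ∃ M : Matrix (Fin (n+2)) (Fin (n+2)) ℤ,
      M = Matrix.of (fun i j => if i = iN then w' j else 0) := ⟨_, rfl⟩
  obtain ⟨A, hA⟩ : ∃ A : Matrix (Fin (n+2)) (Fin (n+2)) ℤ, A = 1 + M := ⟨_, rfl⟩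
  have hMM : M * M = 0 := by
    ext i j
    rw [Matrix.mul_apply, hM]
    simp only [Matrix.of_apply, Matrix.zero_apply]
    by_cases hi : i = iN
    · simp only [if_pos hi]
      have key : ∀ x : Fin (n+2), w' x * (if x = iN then w' j else 0)
          = if x = iN then w' x * w' j else 0 := by
        intro x; split <;> simp
      rw [Finset.sum_congr rfl fun x _ => key x,
        Finset.sum_ite_eq' Finset.univ iN (fun x => w' x * w' j)]
      simp [hw_iN]
    · simp [hi]
  have hdet : A.det = 1 ∨ A.det = -1 := by
    have hinv : A * (1 - M) = 1 := by
      have h2 : A * (1 - M) = 1 - M * M := by rw [hA]; noncomm_ring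
      rw [h2, hMM, sub_zero]
    have h3 : IsUnit A.det :=
      IsUnit.of_mul_eq_one (1-M).det (by rw [← Matrix.det_mul, hinv, Matrix.det_one])
    exact Int.isUnit_iff.mp h3
  obtain ⟨v, hvdef⟩ : ∃ v : Fin (n+2) → ℤ, v = fun i : Fin (n+2) => if i = iN then k+2 else 0 := ⟨_, rfl⟩
  -- mulVec formula
  have hmv : ∀ (x : Fin (n+2) → ℝ) (i : Fin (n+2)), (A.map (fun m : ℤ => (m : ℝ))).mulVec x i
      = x i + (if i = iN then ∑ j, (w' j : ℝ) * x j else 0) := by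
    intro x i
    have expand : ∀ j, (A.map (fun m : ℤ => (m : ℝ))) i j
        = (if i = j then (1:ℝ) else 0) + (if i = iN then (w' j : ℝ) else 0) := by
      intro j
      rw [hA, Matrix.map_apply, Matrix.add_apply, Matrix.one_apply, hM, Matrix.of_apply]
      push_cast
      split <;> split <;> simp
    show ∑ j, (A.map (fun m : ℤ => (m : ℝ))) i j * x j = _
    calc ∑ j, (A.map (fun m : ℤ => (m : ℝ))) i j * x j
        = ∑ j, ((if i = j then (1:ℝ) else 0) * x j + (if i = iN then (w' j : ℝ) else 0) * x j) := by
          exact Finset.sum_congr rfl fun j _ => by rw [expand j, add_mul]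
      _ = x i + (if i = iN then ∑ j, (w' j : ℝ) * x j else 0) := by
          rw [Finset.sum_add_distrib]
          congr 1
          · simp [ite_mul, Finset.sum_ite_eq]
          · by_cases hi : i = iN <;> simp [hi]
  -- sum splitting
  have hsplit : ∀ f : Fin (n+2) → ℝ,
      ∑ i, f i = (∑ i : Fin n, f ⟨i.val, by omega⟩) + f ⟨n, by omega⟩ + f ⟨n+1, by omega⟩ := by
    intro f; rw [Fin.sum_univ_castSucc, Fin.sum_univ_castSucc]; rfl
  have hln : ((k+3).toNat : ℝ) = (k:ℝ) + 3 := by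
    have h4 : ((k+3).toNat : ℤ) = k + 3 := Int.toNat_of_nonneg (by omega)
    exact_mod_cast congrArg (fun z : ℤ => (z : ℝ)) h4
  have hvsum : ∑ i, (v i : ℝ) = (k:ℝ) + 2 := by
    rw [hvdef]
    push_cast
    rw [Finset.sum_ite_eq' Finset.univ iN (fun _ => (k:ℝ)+2)]
    simp
  -- the target convex set
  have hkey : lsSimplex (Tsimp n p q) ≤ (k+3).toNat := by
    apply Nat.sInf_le
    refine ⟨A, v, hdet, ?_⟩
    have main : Tsimp n p q ⊆ {x : Fin (n+2) → ℝ |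
        (∀ i, (0 : ℝ) ≤ (A.map (fun m : ℤ => (m : ℝ))).mulVec x i + (v i : ℝ)) ∧
        ∑ i, ((A.map (fun m : ℤ => (m : ℝ))).mulVec x i + (v i : ℝ)) ≤ (((k+3).toNat : ℕ) : ℝ)} := by
      rw [Tsimp]
      apply convexHull_min
      · -- generators
        intro x hx
        have hcond : ∀ x : Fin (n+2) → ℝ, (∀ i, 0 ≤ x i) →
            (0 ≤ x iN + ((∑ j, (w' j : ℝ) * x j) + ((k:ℝ)+2))) →
            (∑ i, x i) + (∑ j, (w' j : ℝ) * x j) + ((k:ℝ)+2) ≤ (k:ℝ)+3 →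
            x ∈ {x : Fin (n+2) → ℝ |
              (∀ i, (0 : ℝ) ≤ (A.map (fun m : ℤ => (m : ℝ))).mulVec x i + (v i : ℝ)) ∧
              ∑ i, ((A.map (fun m : ℤ => (m : ℝ))).mulVec x i + (v i : ℝ)) ≤ (((k+3).toNat : ℕ) : ℝ)} := by
          intro x hx0 hxw hxs
          constructor
          · intro i
            rw [hmv, hvdef]
            by_cases hi : i = iN
            · simp only [hi, if_pos rfl]
              push_cast
              linarith [hxw]
            · simp only [hi, if_neg hi]
              push_cast
              simpa using hx0 i
          · have hsum : ∑ i, ((A.map (fun m : ℤ => (m : ℝ))).mulVec x i + (v i : ℝ))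
                = (∑ i, x i) + (∑ j, (w' j : ℝ) * x j) + ((k:ℝ)+2) := by
              rw [Finset.sum_congr rfl fun i _ => by rw [hmv]]
              rw [Finset.sum_add_distrib, Finset.sum_add_distrib, hvsum,
                Finset.sum_ite_eq' Finset.univ iN (fun _ => ∑ j, (w' j : ℝ) * x j)]
              simp [add_assoc]
            rw [hsum, hln]
            exact hxs
        rcases hx with hx | ⟨j, rfl⟩
        · -- Tvert case
          subst hx
          have hT1 : ∀ i : Fin n, Tvert n p q ⟨i.val, by omega⟩ = (p i : ℝ) := by
            intro i; rw [Tvert]; simp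
          have hT2 : Tvert n p q ⟨n, by omega⟩ = (q : ℝ) := by
            rw [Tvert]; simp
          have hT3 : Tvert n p q ⟨n+1, by omega⟩ = 1 := by
            rw [Tvert]; simp
          have hw1 : ∀ i : Fin n, w' ⟨i.val, by omega⟩ = -(c i) := by
            intro i; rw [hwdef]; simp
          have hw3 : w' ⟨n+1, by omega⟩ = -b := by
            rw [hwdef]; simp
          have hW : ∑ j, (w' j : ℝ) * Tvert n p q j = -(q:ℝ) - α := by
            rw [hsplit (fun j => (w' j : ℝ) * Tvert n p q j)]
            rw [hT2, hT3, hw3, ← hiN, hw_iN]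
            have h5 : ∀ i : Fin n, (w' ⟨i.val, by omega⟩ : ℝ) * Tvert n p q ⟨i.val, by omega⟩
                = -((c i * p i : ℤ) : ℝ) := by
              intro i; rw [hw1 i, hT1 i]; push_cast; ring
            rw [Finset.sum_congr rfl fun i _ => h5 i]
            have h6 : ∑ i : Fin n, -((c i * p i : ℤ) : ℝ) = -(((∑ i, c i * p i : ℤ)) : ℝ) := by
              push_cast
              rw [← Finset.sum_neg_distrib]
            rw [h6]
            have h7 : ((∑ i, c i * p i : ℤ) : ℝ) = (q:ℝ) + α - b := by
              have h7' : (∑ i, c i * p i) = q + α - b := by omega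
              rw [h7']; push_cast; ring
            rw [h7]
            push_cast
            ring
          have hS : ∑ i, Tvert n p q i = (α:ℝ) + q + 1 := by
            rw [hsplit (Tvert n p q)]
            rw [hT2, hT3]
            rw [Finset.sum_congr rfl fun i _ => hT1 i]
            have h8 : ∑ i : Fin n, (p i : ℝ) = (α : ℝ) := by
              rw [hα]; push_cast; ring
            rw [h8]
          apply hcond
          · intro i
            simp only [Tvert]
            split
            · exact_mod_cast hp _
            · split
              · exact_mod_cast (by omega : (0:ℤ) ≤ q)
              · norm_num
          · rw [hW, hiN, hT2]
            have h11 : (α:ℝ) ≤ (k:ℝ) + 2 := by exact_mod_cast (by omega : α ≤ k + 2)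
            linarith
          · rw [hW, hS]; linarith
        · -- stdVert case
          have hstd : ∀ i, stdVert (n+2) j i = if i = j then 1 else 0 := fun i => rfl
          have hWs : ∑ j', (w' j' : ℝ) * stdVert (n+2) j j' = (w' j : ℝ) := by
            simp only [stdVert, mul_ite, mul_one, mul_zero]
            rw [Finset.sum_ite_eq' Finset.univ j (fun j' => (w' j' : ℝ))]
            simp
          have hSs : ∑ i, stdVert (n+2) j i = 1 := by
            simp only [stdVert]
            rw [Finset.sum_ite_eq' Finset.univ j (fun _ => (1:ℝ))]
            simp
          apply hcond
          · intro i; rw [hstd]; split <;> norm_num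
          · rw [hWs]
            have h9 : (-(k+2) : ℝ) ≤ (w' j : ℝ) := by exact_mod_cast hw_ge j
            have h10 : (0:ℝ) ≤ stdVert (n+2) j iN := by rw [hstd]; split <;> norm_num
            linarith
          · rw [hWs, hSs]
            have h12 : ((w' j : ℝ)) ≤ 0 := by exact_mod_cast hw_le j
            linarith
      · -- convexity
        intro x hx y hy a bb ha hb hab
        have hlin : ∀ i, (A.map (fun m : ℤ => (m : ℝ))).mulVec (a • x + bb • y) i
            = a * (A.map (fun m : ℤ => (m : ℝ))).mulVec x i
              + bb * (A.map (fun m : ℤ => (m : ℝ))).mulVec y i := by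
          intro i
          rw [Matrix.mulVec_add, Matrix.mulVec_smul, Matrix.mulVec_smul]
          simp [smul_eq_mul]
        constructor
        · intro i
          have h1 := hx.1 i
          have h2 := hy.1 i
          rw [hlin i]
          have e : a * ((A.map (fun m : ℤ => (m : ℝ))).mulVec x i + (v i : ℝ))
              + bb * ((A.map (fun m : ℤ => (m : ℝ))).mulVec y i + (v i : ℝ))
              = a * (A.map (fun m : ℤ => (m : ℝ))).mulVec x i
                + bb * (A.map (fun m : ℤ => (m : ℝ))).mulVec y i + (a + bb) * (v i : ℝ) := by
            ring
          rw [hab, one_mul] at e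
          linarith [mul_nonneg ha h1, mul_nonneg hb h2, e]
        · have h1 := hx.2
          have h2 := hy.2
          have hseq : ∑ i, ((A.map (fun m : ℤ => (m : ℝ))).mulVec (a • x + bb • y) i + (v i : ℝ))
              = a * (∑ i, ((A.map (fun m : ℤ => (m : ℝ))).mulVec x i + (v i : ℝ)))
                + bb * (∑ i, ((A.map (fun m : ℤ => (m : ℝ))).mulVec y i + (v i : ℝ))) := by
            rw [Finset.mul_sum, Finset.mul_sum, ← Finset.sum_add_distrib]
            apply Finset.sum_congr rfl
            intro i _
            rw [hlin i]
            linear_combination (-(v i : ℝ)) * hab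
          rw [hseq]
          have e2 : a * (((k+3).toNat : ℕ) : ℝ) + bb * (((k+3).toNat : ℕ) : ℝ)
              = (((k+3).toNat : ℕ) : ℝ) := by
            rw [← add_mul, hab, one_mul]
          linarith [mul_le_mul_of_nonneg_left h1 ha, mul_le_mul_of_nonneg_left h2 hb, e2]
    intro x hx
    exact main hx
  have hfin : (lsSimplex (Tsimp n p q) : ℤ) ≤ ((k+3).toNat : ℤ) := by exact_mod_cast hkey
  rwa [Int.toNat_of_nonneg (by omega)] at hfin
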